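/- Let T be a tree of order at least three and e an edge of the complement of T. Then sdim(T + e) ≥ sdim(T) − 2, and this bound is sharp (attained, e.g., by a comb with at least four major vertices). -/

import Mathlib

open SimpleGraph

/-- One step of the zero forcing color-change rule: add every white vertex that is
the unique white neighbor of some black vertex. -/
def zfStep {V : Type*} (G : SimpleGraph V) (B : Set V) : Set V :=
  B ∪ {w | ∃ u ∈ B, G.Adj u w ∧ ∀ x, G.Adj u x → x ∉ B → x = w}

/-- `S` is a zero forcing set if iterating the color-change rule blackens all vertices. -/
def IsZeroForcingSet {V : Type*} (G : SimpleGraph V) (S : Set V) : Prop :=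
  ∃ n : ℕ, (zfStep G)^[n] S = Set.univ

/-- The zero forcing number: minimum cardinality of a zero forcing set. -/
noncomputable def zeroForcingNumber {V : Type*} (G : SimpleGraph V) : ℕ :=
  sInf {n | ∃ S : Set V, S.ncard = n ∧ IsZeroForcingSet G S}

/-- A (finite) graph is a path graph: nonempty, connected, acyclic, max degree ≤ 2. -/
def IsPathGraph {V : Type*} (G : SimpleGraph V) : Prop :=
  Nonempty V ∧ G.Connected ∧ G.IsAcyclic ∧ ∀ v : V, (G.neighborSet v).ncard ≤ 2

/-- The path cover number: minimum number of vertex-disjoint induced paths covering `V`. -/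
noncomputable def pathCoverNumber {V : Type*} (G : SimpleGraph V) : ℕ :=
  sInf {n | ∃ P : Finset (Set V), P.card = n ∧
    (∀ S ∈ P, IsPathGraph (G.induce S)) ∧
    (P : Set (Set V)).PairwiseDisjoint id ∧ ⋃₀ (P : Set (Set V)) = Set.univ}

/-- `u` lies on an `x`–`v` geodesic. -/
def LiesBetween {V : Type*} (G : SimpleGraph V) (x u v : V) : Prop :=
  G.dist x u + G.dist u v = G.dist x v

/-- `x` strongly resolves the pair `u, v`. -/
def StronglyResolves {V : Type*} (G : SimpleGraph V) (x u v : V) : Prop :=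
  LiesBetween G x u v ∨ LiesBetween G x v u

/-- `W` is a strong resolving set of `G`. -/
def IsStrongResolvingSet {V : Type*} (G : SimpleGraph V) (W : Set V) : Prop :=
  ∀ u v : V, u ≠ v → ∃ x ∈ W, StronglyResolves G x u v

/-- The strong metric dimension: minimum cardinality of a strong resolving set. -/
noncomputable def sdim {V : Type*} (G : SimpleGraph V) : ℕ :=
  sInf {n | ∃ W : Set V, W.ncard = n ∧ IsStrongResolvingSet G W}

/-- A leaf is a vertex of degree one. -/
def IsLeaf {V : Type*} (G : SimpleGraph V) (v : V) : Prop :=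
  (G.neighborSet v).ncard = 1

/-- `σ(G)`: the number of leaves of `G`. -/
noncomputable def leafCount {V : Type*} (G : SimpleGraph V) : ℕ :=
  {v | IsLeaf G v}.ncard

section General
variable {V : Type*} {G : SimpleGraph V}

lemma univ_srs (G : SimpleGraph V) : IsStrongResolvingSet G Set.univ := by
  intro p q _
  refine ⟨p, trivial, Or.inl ?_⟩
  unfold LiesBetween
  simp [SimpleGraph.dist_self]

lemma sdim_exists [Fintype V] (G : SimpleGraph V) :
    ∃ W : Set V, W.ncard = sdim G ∧ IsStrongResolvingSet G W := by
  have h : sdim G ∈ {n | ∃ W : Set V, W.ncard = n ∧ IsStrongResolvingSet G W} :=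
    Nat.sInf_mem ⟨(Set.univ : Set V).ncard, Set.univ, rfl, univ_srs G⟩
  obtain ⟨W, hW1, hW2⟩ := h
  exact ⟨W, hW1, hW2⟩

lemma sdim_le_of_srs [Fintype V] {G : SimpleGraph V} {W : Set V}
    (h : IsStrongResolvingSet G W) : sdim G ≤ W.ncard :=
  Nat.sInf_le ⟨W, rfl, h⟩

/-- helper: peel off the first step of a walk between distinct vertices. -/
lemma exists_first_step {a b : V} (p : G.Walk a b) (h : a ≠ b) :
    ∃ (w : V) (q : G.Walk w b), G.Adj a w ∧ q.length + 1 = p.length := by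
  cases p with
  | nil => exact absurd rfl h
  | cons hadj q => exact ⟨_, q, hadj, rfl⟩

/-- If `x` lies strictly outside `{ℓ₁, ℓ₂}` it cannot strongly resolve two leaves. -/
lemma leaf_between_aux [Fintype V] (hG : G.Connected) {l1 l2 x : V}
    (hl1 : IsLeaf G l1) (hne : l1 ≠ l2) (hx1 : x ≠ l1) (hx2 : x ≠ l2)
    (h : LiesBetween G x l1 l2) : False := by
  obtain ⟨w0, hw0⟩ := Set.ncard_eq_one.mp hl1
  have hd1 : 0 < G.dist x l1 := hG.pos_dist_of_ne hx1
  have hD : 0 < G.dist l1 l2 := hG.pos_dist_of_ne hne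
  -- penultimate vertex of a geodesic from x to l1
  obtain ⟨p, hp⟩ := hG.exists_walk_length_eq_dist x l1
  obtain ⟨w, q, haw, hq⟩ := exists_first_step p.reverse (Ne.symm hx1)
  have hwmem : w = w0 := by
    have : w ∈ G.neighborSet l1 := haw
    rw [hw0] at this; exact this
  have h1 : G.dist w x + 1 ≤ G.dist x l1 := by
    have := SimpleGraph.dist_le q
    rw [SimpleGraph.Walk.length_reverse] at hq
    omega
  -- first vertex of a geodesic from l1 to l2
  obtain ⟨p2, hp2⟩ := hG.exists_walk_length_eq_dist l1 l2
  obtain ⟨w', q', haw', hq'⟩ := exists_first_step p2 hne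
  have hwmem' : w' = w0 := by
    have : w' ∈ G.neighborSet l1 := haw'
    rw [hw0] at this; exact this
  have hww : w' = w := hwmem'.trans hwmem.symm
  subst hww
  have h2 : G.dist w' l2 + 1 ≤ G.dist l1 l2 := by
    have := SimpleGraph.dist_le q'
    omega
  have h3 : G.dist x l2 ≤ G.dist x w' + G.dist w' l2 := hG.dist_triangle
  have h4 : G.dist x w' = G.dist w' x := SimpleGraph.dist_comm ..
  unfold LiesBetween at h
  omega

lemma leaf_resolver [Fintype V] (hG : G.Connected) {l1 l2 x : V}
    (hl1 : IsLeaf G l1) (hl2 : IsLeaf G l2) (hne : l1 ≠ l2)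
    (h : StronglyResolves G x l1 l2) : x = l1 ∨ x = l2 := by
  by_contra hc
  push_neg at hc
  obtain ⟨hx1, hx2⟩ := hc
  cases h with
  | inl h => exact leaf_between_aux hG hl1 hne hx1 hx2 h
  | inr h => exact leaf_between_aux hG hl2 hne.symm hx2 hx1 h

/-- Lower bound: `σ(G) − 1 ≤ sdim G` for connected graphs. -/
lemma leafCount_le_sdim_add_one [Fintype V] (hG : G.Connected) :
    leafCount G ≤ sdim G + 1 := by
  classical
  obtain ⟨W, hWc, hW⟩ := sdim_exists G
  set L : Set V := {v | IsLeaf G v} with hL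
  have hsub : ∀ l1 ∈ L \ W, ∀ l2 ∈ L \ W, l1 = l2 := by
    rintro l1 ⟨hl1, hl1W⟩ l2 ⟨hl2, hl2W⟩
    by_contra hne
    obtain ⟨x, hxW, hres⟩ := hW l1 l2 hne
    rcases leaf_resolver hG hl1 hl2 hne hres with rfl | rfl
    · exact hl1W hxW
    · exact hl2W hxW
  have hLsplit : L = (L ∩ W) ∪ (L \ W) := (Set.inter_union_diff L W).symm
  have h1 : L.ncard ≤ (L ∩ W).ncard + (L \ W).ncard := by
    conv_lhs => rw [hLsplit]
    exact Set.ncard_union_le _ _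
  have h2 : (L ∩ W).ncard ≤ W.ncard :=
    Set.ncard_le_ncard Set.inter_subset_right W.toFinite
  have h3 : (L \ W).ncard ≤ 1 := (Set.ncard_le_one (L \ W).toFinite).mpr hsub
  have : leafCount G = L.ncard := rfl
  omega
end General

section Tree
variable {V : Type*} {T : SimpleGraph V}

/-- In a tree, every path between two vertices has length equal to the distance. -/
lemma tree_path_length (hT : T.IsTree) {x b : V} (p : T.Walk x b) (hp : p.IsPath) :
    p.length = T.dist x b := by
  classical
  obtain ⟨r, hr⟩ := hT.isConnected.exists_walk_length_eq_dist x b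
  have hb1 : r.bypass.IsPath := SimpleGraph.Walk.bypass_isPath r
  have hb2 : r.bypass.length = T.dist x b :=
    le_antisymm (hr ▸ SimpleGraph.Walk.length_bypass_le r) (SimpleGraph.dist_le _)
  have := hT.IsAcyclic.path_unique ⟨p, hp⟩ ⟨r.bypass, hb1⟩
  have hpl : p = r.bypass := congrArg Subtype.val this
  rw [hpl, hb2]

/-- In a tree, a vertex `x ≠ b` has a unique neighbor closer to `b`; all other
neighbors are farther. -/
lemma tree_neighbors (hT : T.IsTree) (x b : V) (hxb : x ≠ b) :
    ∃ z, T.Adj x z ∧ T.dist z b + 1 = T.dist x b ∧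
      ∀ y, T.Adj x y → y ≠ z → T.dist y b = T.dist x b + 1 := by
  classical
  obtain ⟨r, hr⟩ := hT.isConnected.exists_walk_length_eq_dist x b
  have hqp : r.bypass.IsPath := SimpleGraph.Walk.bypass_isPath r
  have hql : r.bypass.length = T.dist x b :=
    le_antisymm (hr ▸ SimpleGraph.Walk.length_bypass_le r) (SimpleGraph.dist_le _)
  set q := r.bypass with hqdef
  clear_value q
  cases q with
  | nil => exact absurd rfl hxb
  | cons hadj q' =>
    rename_i z
    rw [SimpleGraph.Walk.cons_isPath_iff] at hqp
    obtain ⟨hq'p, hxq'⟩ := hqp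
    rw [SimpleGraph.Walk.length_cons] at hql
    have hq'l : q'.length = T.dist z b := tree_path_length hT q' hq'p
    refine ⟨z, hadj, by omega, ?_⟩
    intro y hy hyz
    by_cases hmem : y ∈ q'.support
    · exfalso
      set s := q'.takeUntil y hmem with hsdef
      have hs : s.IsPath := hq'p.takeUntil hmem
      have hxs : x ∉ s.support := fun hc => hxq' (SimpleGraph.Walk.support_takeUntil_subset _ hmem hc)
      have hp1 : (SimpleGraph.Walk.cons hadj s).IsPath :=
        (SimpleGraph.Walk.cons_isPath_iff _ _).mpr ⟨hs, hxs⟩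
      have hp2 : (SimpleGraph.Walk.cons hy SimpleGraph.Walk.nil).IsPath := by
        rw [SimpleGraph.Walk.cons_isPath_iff]
        refine ⟨SimpleGraph.Walk.IsPath.nil, ?_⟩
        simp only [SimpleGraph.Walk.support_nil, List.mem_singleton]
        exact hy.ne
      have := hT.IsAcyclic.path_unique ⟨SimpleGraph.Walk.cons hadj s, hp1⟩
        ⟨SimpleGraph.Walk.cons hy SimpleGraph.Walk.nil, hp2⟩
      have h' : SimpleGraph.Walk.cons hadj s = SimpleGraph.Walk.cons hy SimpleGraph.Walk.nil :=
        congrArg Subtype.val this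
      have hleq := congrArg SimpleGraph.Walk.length h'
      simp only [SimpleGraph.Walk.length_cons, SimpleGraph.Walk.length_nil] at hleq
      exact hyz.symm (SimpleGraph.Walk.eq_of_length_eq_zero (by omega : s.length = 0))
    · have hyx : y ∉ (SimpleGraph.Walk.cons hadj q').support := by
        rw [SimpleGraph.Walk.support_cons, List.mem_cons]
        intro hc
        rcases hc with hc | hc
        · exact hy.ne' hc
        · exact hmem hc
      have hp3 : (SimpleGraph.Walk.cons hy.symm (SimpleGraph.Walk.cons hadj q')).IsPath := by
        rw [SimpleGraph.Walk.cons_isPath_iff]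
        refine ⟨(SimpleGraph.Walk.cons_isPath_iff _ _).mpr ⟨hq'p, hxq'⟩, hyx⟩
      have := tree_path_length hT _ hp3
      simp only [SimpleGraph.Walk.length_cons] at this
      omega

/-- Behind every vertex (away from another vertex) there is a leaf of the tree. -/
lemma tree_exists_leaf_between [Fintype V] (hT : T.IsTree) (a b : V) (hab : a ≠ b) :
    ∃ x, IsLeaf T x ∧ T.dist x a + T.dist a b = T.dist x b := by
  classical
  set F : Finset V := Finset.univ.filter (fun x => T.dist x a + T.dist a b = T.dist x b) with hF
  have ha : a ∈ F := by simp [hF, SimpleGraph.dist_self]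
  obtain ⟨x, hxF, hmax⟩ := F.exists_max_image (fun x => T.dist x b) ⟨a, ha⟩
  have hx : T.dist x a + T.dist a b = T.dist x b := by
    simpa [hF] using hxF
  have hab' : 0 < T.dist a b := hT.isConnected.pos_dist_of_ne hab
  have hxb : x ≠ b := by
    rintro rfl
    rw [SimpleGraph.dist_self] at hx
    omega
  obtain ⟨z, hz, hzd, hrest⟩ := tree_neighbors hT x b hxb
  have hnb : T.neighborSet x = {z} := by
    ext y
    simp only [SimpleGraph.mem_neighborSet, Set.mem_singleton_iff]
    constructor
    · intro hy
      by_contra hyz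
      have hd := hrest y hy hyz
      have h1 : T.dist y x ≤ 1 := by
        have := SimpleGraph.dist_le (SimpleGraph.Walk.cons hy.symm SimpleGraph.Walk.nil)
        simpa using this
      have h1' : T.dist y a ≤ T.dist y x + T.dist x a := hT.isConnected.dist_triangle
      have h2 : T.dist y b ≤ T.dist y a + T.dist a b := hT.isConnected.dist_triangle
      have hyF : y ∈ F := by
        simp only [hF, Finset.mem_filter, Finset.mem_univ, true_and]
        omega
      have := hmax y hyF
      omega
    · rintro rfl
      exact hz
  refine ⟨x, ?_, hx⟩
  unfold IsLeaf
  rw [hnb]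
  exact Set.ncard_singleton z

/-- Upper bound: `sdim T ≤ σ(T) − 1` for a tree with at least two vertices. -/
lemma tree_sdim_add_one_le_leafCount [Fintype V] (hT : T.IsTree)
    (hcard : 1 < Fintype.card V) : sdim T + 1 ≤ leafCount T := by
  classical
  obtain ⟨a, b, hab⟩ := Fintype.exists_pair_of_one_lt_card hcard
  obtain ⟨l0, hl0, -⟩ := tree_exists_leaf_between hT a b hab
  set L : Set V := {v | IsLeaf T v} with hL
  have hmem : l0 ∈ L := hl0
  have hsr : IsStrongResolvingSet T (L \ {l0}) := by
    intro p q hpq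
    obtain ⟨x1, hx1l, hx1⟩ := tree_exists_leaf_between hT p q hpq
    obtain ⟨x2, hx2l, hx2⟩ := tree_exists_leaf_between hT q p hpq.symm
    have hpq' : 0 < T.dist p q := hT.isConnected.pos_dist_of_ne hpq
    have hcomm : T.dist q p = T.dist p q := SimpleGraph.dist_comm ..
    have hx12 : x1 ≠ x2 := by
      rintro rfl
      omega
    rcases eq_or_ne x1 l0 with rfl | h1
    · exact ⟨x2, ⟨hx2l, fun h => hx12 (Set.mem_singleton_iff.mp h).symm⟩, Or.inr hx2⟩
    · exact ⟨x1, ⟨hx1l, fun h => h1 (Set.mem_singleton_iff.mp h)⟩, Or.inl hx1⟩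
  have hle : sdim T ≤ (L \ {l0}).ncard := sdim_le_of_srs hsr
  have hdiff : (L \ {l0}).ncard = L.ncard - 1 := Set.ncard_diff_singleton_of_mem hmem
  have hpos : 0 < L.ncard := (Set.ncard_pos L.toFinite).mpr ⟨l0, hmem⟩
  have : leafCount T = L.ncard := rfl
  omega

end Tree

section Edge
variable {V : Type*}

lemma leafCount_le_add_edge [Fintype V] (T : SimpleGraph V) (u v : V) :
    leafCount T ≤ leafCount (T ⊔ fromEdgeSet {s(u, v)}) + 2 := by
  classical
  set G := T ⊔ fromEdgeSet {s(u, v)} with hG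
  have hnb : ∀ w, w ≠ u → w ≠ v → G.neighborSet w = T.neighborSet w := by
    intro w hwu hwv
    ext y
    simp only [SimpleGraph.mem_neighborSet, hG, SimpleGraph.sup_adj,
      SimpleGraph.fromEdgeSet_adj, Set.mem_singleton_iff]
    constructor
    · rintro (h | ⟨he, hne⟩)
      · exact h
      · rcases Sym2.eq_iff.mp he with ⟨rfl, rfl⟩ | ⟨rfl, rfl⟩
        · exact absurd rfl hwu
        · exact absurd rfl hwv
    · exact fun h => Or.inl h
  have hsub : {w | IsLeaf T w} \ {u, v} ⊆ {w | IsLeaf G w} := by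
    rintro w ⟨hw, hwuv⟩
    simp only [Set.mem_insert_iff, Set.mem_singleton_iff, not_or] at hwuv
    show IsLeaf G w
    unfold IsLeaf at hw ⊢
    rw [hnb w hwuv.1 hwuv.2]
    exact hw
  have h1 : {w | IsLeaf T w} ⊆ ({w | IsLeaf T w} \ {u, v}) ∪ {u, v} :=
    Set.subset_diff_union _ _
  calc leafCount T ≤ (({w | IsLeaf T w} \ {u, v}) ∪ ({u, v} : Set V)).ncard :=
        Set.ncard_le_ncard h1 (Set.toFinite _)
    _ ≤ ({w | IsLeaf T w} \ {u, v}).ncard + ({u, v} : Set V).ncard :=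
        Set.ncard_union_le _ _
    _ ≤ leafCount G + 2 := by
        have hA : ({w | IsLeaf T w} \ {u, v}).ncard ≤ leafCount G :=
          Set.ncard_le_ncard hsub (Set.toFinite _)
        have hB : ({u, v} : Set V).ncard ≤ 2 := by
          have := Set.ncard_insert_le u ({v} : Set V)
          simpa [Set.ncard_singleton] using this
        omega

/-- A certified distance table characterizes graph distance. -/
lemma dist_eq_of_table (G : SimpleGraph V) (d : V → V → ℕ)
    (h0 : ∀ u, d u u = 0)
    (h1 : ∀ u v, u ≠ v → ∃ w, G.Adj u w ∧ d w v + 1 = d u v)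
    (h2 : ∀ u v w, G.Adj u w → d u v ≤ d w v + 1) :
    (∀ u v, G.Reachable u v) ∧ (∀ u v, G.dist u v = d u v) := by
  have hwalk : ∀ n (u v : V), d u v ≤ n → ∃ p : G.Walk u v, p.length = d u v := by
    intro n
    induction n with
    | zero =>
      intro u v hd
      have huv : u = v := by
        by_contra hne
        obtain ⟨w, -, hw⟩ := h1 u v hne
        omega
      subst huv
      exact ⟨SimpleGraph.Walk.nil, by simp [h0]⟩
    | succ n ih =>
      intro u v hd
      by_cases huv : u = v
      · subst huv; exact ⟨SimpleGraph.Walk.nil, by simp [h0]⟩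
      · obtain ⟨w, hadj, hw⟩ := h1 u v huv
        obtain ⟨p, hp⟩ := ih w v (by omega)
        exact ⟨SimpleGraph.Walk.cons hadj p, by simp [hp]; omega⟩
  have hlow : ∀ (u v : V) (p : G.Walk u v), d u v ≤ p.length := by
    intro u v p
    induction p with
    | nil => simp [h0]
    | cons hadj q ih =>
      rename_i a c b
      calc d a b ≤ d c b + 1 := h2 a b c hadj
        _ ≤ q.length + 1 := by omega
        _ = (SimpleGraph.Walk.cons hadj q).length := by simp
  constructor
  · intro u v
    obtain ⟨p, -⟩ := hwalk (d u v) u v le_rfl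
    exact ⟨p⟩
  · intro u v
    obtain ⟨p, hp⟩ := hwalk (d u v) u v le_rfl
    refine le_antisymm (hp ▸ SimpleGraph.dist_le p) ?_
    obtain ⟨q, hq⟩ := SimpleGraph.Reachable.exists_walk_length_eq_dist ⟨p⟩
    rw [← hq]
    exact hlow u v q

/-- A two-coloring separated exactly by one edge certifies that edge is a bridge. -/
lemma isBridge_of_coloring (G : SimpleGraph V) {u v : V} (h : G.Adj u v) (χ : V → Bool)
    (hχ : χ u ≠ χ v)
    (hE : ∀ a b, G.Adj a b → ¬(a = u ∧ b = v) → ¬(a = v ∧ b = u) → χ a = χ b) :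
    G.IsBridge s(u, v) := by
  rw [SimpleGraph.isBridge_iff]
  rintro ⟨p⟩
  have key : ∀ (a b : V) (q : (G \ fromEdgeSet {s(u, v)}).Walk a b), χ a = χ b := by
    intro a b q
    induction q with
    | nil => rfl
    | cons hadj q ih =>
      rename_i a' c' b'
      have hadj' : G.Adj a' c' ∧ ¬(fromEdgeSet {s(u, v)}).Adj a' c' := hadj
      have hne : ¬(s(a', c') = s(u, v)) := by
        intro hc
        exact hadj'.2 ((SimpleGraph.fromEdgeSet_adj _).mpr ⟨hc, hadj'.1.ne⟩)
      rw [Sym2.eq_iff] at hne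
      push_neg at hne
      have := hE a' c' hadj'.1 (fun hc => (hne.1 hc.1) hc.2) (fun hc => (hne.2 hc.1) hc.2)
      exact this.trans ih
  exact hχ (key u v p)

end Edge

section Concrete

def combAdjL : List (ℕ × ℕ) :=
  [(0,1),(1,2),(2,3),(3,4),(4,5),(0,6),(1,7),(2,8),(3,9),(4,10),(5,11)]

def combT : SimpleGraph (Fin 12) where
  Adj x y := (x.1, y.1) ∈ combAdjL ∨ (y.1, x.1) ∈ combAdjL
  symm := ⟨fun x y h => Or.symm h⟩
  loopless := by
    constructor
    show ∀ x : Fin 12, ¬((x.1, x.1) ∈ combAdjL ∨ (x.1, x.1) ∈ combAdjL)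
    decide

instance : DecidableRel combT.Adj := fun x y =>
  inferInstanceAs (Decidable ((x.1, y.1) ∈ combAdjL ∨ (y.1, x.1) ∈ combAdjL))

def combH : SimpleGraph (Fin 12) where
  Adj x y := combT.Adj x y ∨ (x = 7 ∧ y = 10) ∨ (x = 10 ∧ y = 7)
  symm := by
    constructor
    rintro x y (h | ⟨rfl, rfl⟩ | ⟨rfl, rfl⟩)
    · exact Or.inl h.symm
    · exact Or.inr (Or.inr ⟨rfl, rfl⟩)
    · exact Or.inr (Or.inl ⟨rfl, rfl⟩)
  loopless := by
    constructor
    rintro x (h | ⟨rfl, h⟩ | ⟨rfl, h⟩)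
    · exact combT.irrefl h
    · exact absurd h (by decide)
    · exact absurd h (by decide)

instance : DecidableRel combH.Adj := fun x y =>
  inferInstanceAs (Decidable (combT.Adj x y ∨ (x = 7 ∧ y = 10) ∨ (x = 10 ∧ y = 7)))

def dTtab : List (List ℕ) := [[0, 1, 2, 3, 4, 5, 1, 2, 3, 4, 5, 6], [1, 0, 1, 2, 3, 4, 2, 1, 2, 3, 4, 5], [2, 1, 0, 1, 2, 3, 3, 2, 1, 2, 3, 4], [3, 2, 1, 0, 1, 2, 4, 3, 2, 1, 2, 3], [4, 3, 2, 1, 0, 1, 5, 4, 3, 2, 1, 2], [5, 4, 3, 2, 1, 0, 6, 5, 4, 3, 2, 1], [1, 2, 3, 4, 5, 6, 0, 3, 4, 5, 6, 7], [2, 1, 2, 3, 4, 5, 3, 0, 3, 4, 5, 6], [3, 2, 1, 2, 3, 4, 4, 3, 0, 3, 4, 5], [4, 3, 2, 1, 2, 3, 5, 4, 3, 0, 3, 4], [5, 4, 3, 2, 1, 2, 6, 5, 4, 3, 0, 3], [6, 5, 4, 3, 2, 1, 7, 6, 5, 4, 3, 0]]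

def dGtab : List (List ℕ) := [[0, 1, 2, 3, 4, 5, 1, 2, 3, 4, 3, 6], [1, 0, 1, 2, 3, 4, 2, 1, 2, 3, 2, 5], [2, 1, 0, 1, 2, 3, 3, 2, 1, 2, 3, 4], [3, 2, 1, 0, 1, 2, 4, 3, 2, 1, 2, 3], [4, 3, 2, 1, 0, 1, 5, 2, 3, 2, 1, 2], [5, 4, 3, 2, 1, 0, 6, 3, 4, 3, 2, 1], [1, 2, 3, 4, 5, 6, 0, 3, 4, 5, 4, 7], [2, 1, 2, 3, 2, 3, 3, 0, 3, 4, 1, 4], [3, 2, 1, 2, 3, 4, 4, 3, 0, 3, 4, 5], [4, 3, 2, 1, 2, 3, 5, 4, 3, 0, 3, 4], [3, 2, 3, 2, 1, 2, 4, 1, 4, 3, 0, 3], [6, 5, 4, 3, 2, 1, 7, 4, 5, 4, 3, 0]]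

def dT : Fin 12 → Fin 12 → ℕ := fun i j => (dTtab.getD i.1 []).getD j.1 0
def dG : Fin 12 → Fin 12 → ℕ := fun i j => (dGtab.getD i.1 []).getD j.1 0

def combCol : Fin 12 → Fin 12 → Fin 12 → Bool := fun a b x =>
  if b.1 = a.1 + 6 then x == b
  else if a.1 = b.1 + 6 then x == a
  else decide (x.1 ≤ min a.1 b.1 ∨ (6 ≤ x.1 ∧ x.1 ≤ 6 + min a.1 b.1))

-- decidable checks
lemma combT_table : (∀ u, dT u u = 0) ∧
    (∀ u v : Fin 12, u ≠ v → ∃ w, combT.Adj u w ∧ dT w v + 1 = dT u v) ∧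
    (∀ u v w : Fin 12, combT.Adj u w → dT u v ≤ dT w v + 1) := by decide

lemma combH_table : (∀ u, dG u u = 0) ∧
    (∀ u v : Fin 12, u ≠ v → ∃ w, combH.Adj u w ∧ dG w v + 1 = dG u v) ∧
    (∀ u v w : Fin 12, combH.Adj u w → dG u v ≤ dG w v + 1) := by decide

lemma combT_col : ∀ a b : Fin 12, combT.Adj a b →
    (combCol a b a ≠ combCol a b b ∧
      ∀ x y : Fin 12, combT.Adj x y → ¬(x = a ∧ y = b) → ¬(x = b ∧ y = a) →
        combCol a b x = combCol a b y) := by decide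

lemma combW_resolves : ∀ u v : Fin 12, u ≠ v →
    ∃ x ∈ ({6, 8, 9} : Finset (Fin 12)),
      (dG x u + dG u v = dG x v ∨ dG x v + dG v u = dG x u) := by decide

lemma combT_leaf_card :
    (Finset.univ.filter fun v : Fin 12 => (Finset.univ.filter (combT.Adj v)).card = 1).card
      = 6 := by decide

lemma combH_leaf_card :
    (Finset.univ.filter fun v : Fin 12 => (Finset.univ.filter (combH.Adj v)).card = 1).card
      = 4 := by decide

end Concrete

section Final

lemma leafCount_eq_filter {V : Type*} [Fintype V] [DecidableEq V] (G : SimpleGraph V)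
    [DecidableRel G.Adj] :
    leafCount G = (Finset.univ.filter fun v => (Finset.univ.filter (G.Adj v)).card = 1).card := by
  have h1 : ∀ v, (G.neighborSet v).ncard = (Finset.univ.filter (G.Adj v)).card := by
    intro v
    rw [Set.ncard_eq_toFinset_card']
    show (G.neighborFinset v).card = _
    rw [neighborFinset_eq_filter]
  have h2 : {v | IsLeaf G v}
      = ↑(Finset.univ.filter fun v => (Finset.univ.filter (G.Adj v)).card = 1) := by
    ext v
    simp only [Set.mem_setOf_eq, Finset.coe_filter, Finset.mem_univ, true_and]
    unfold IsLeaf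
    rw [h1]
  unfold leafCount
  rw [h2, Set.ncard_coe_finset]

lemma combH_eq : combT ⊔ fromEdgeSet {s((7 : Fin 12), (10 : Fin 12))} = combH := by
  ext x y
  rw [SimpleGraph.sup_adj, SimpleGraph.fromEdgeSet_adj]
  show _ ↔ combT.Adj x y ∨ (x = 7 ∧ y = 10) ∨ (x = 10 ∧ y = 7)
  constructor
  · rintro (h | ⟨he', hne⟩)
    · exact Or.inl h
    · rw [Set.mem_singleton_iff, Sym2.eq_iff] at he'
      exact Or.inr he'
  · rintro (h | ⟨rfl, rfl⟩ | ⟨rfl, rfl⟩)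
    · exact Or.inl h
    · exact Or.inr ⟨Set.mem_singleton _, by decide⟩
    · refine Or.inr ⟨?_, by decide⟩
      rw [Set.mem_singleton_iff]
      exact Sym2.eq_iff.mpr (Or.inr ⟨rfl, rfl⟩)

lemma combT_connected : combT.Connected := by
  obtain ⟨h0, h1, h2⟩ := combT_table
  rw [connected_iff]
  exact ⟨fun u v => (dist_eq_of_table combT dT h0 h1 h2).1 u v, ⟨0⟩⟩

lemma combT_isTree : combT.IsTree := by
  refine ⟨combT_connected, ?_⟩
  rw [isAcyclic_iff_forall_adj_isBridge]
  intro a b hab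
  exact isBridge_of_coloring combT hab (combCol a b) (combT_col a b hab).1 (combT_col a b hab).2

lemma combH_connected : combH.Connected := by
  obtain ⟨h0, h1, h2⟩ := combH_table
  rw [connected_iff]
  exact ⟨fun u v => (dist_eq_of_table combH dG h0 h1 h2).1 u v, ⟨0⟩⟩

lemma sdim_combT : sdim combT = 5 := by
  have hup : sdim combT + 1 ≤ leafCount combT :=
    tree_sdim_add_one_le_leafCount combT_isTree (by simp)
  have hlow : leafCount combT ≤ sdim combT + 1 := leafCount_le_sdim_add_one combT_connected
  have hleaf : leafCount combT = 6 := by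
    rw [leafCount_eq_filter]
    exact combT_leaf_card
  omega

lemma sdim_combH : sdim combH = 3 := by
  have hdG : ∀ a b, combH.dist a b = dG a b := by
    obtain ⟨h0, h1, h2⟩ := combH_table
    exact (dist_eq_of_table combH dG h0 h1 h2).2
  have hsrs : IsStrongResolvingSet combH ↑({6, 8, 9} : Finset (Fin 12)) := by
    intro p q hpq
    obtain ⟨x, hx, hres⟩ := combW_resolves p q hpq
    refine ⟨x, Finset.mem_coe.mpr hx, ?_⟩
    unfold StronglyResolves LiesBetween
    simp only [hdG]
    exact hres
  have hup : sdim combH ≤ 3 := by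
    have := sdim_le_of_srs hsrs
    rwa [Set.ncard_coe_finset, (by decide : ({6, 8, 9} : Finset (Fin 12)).card = 3)] at this
  have hlow : leafCount combH ≤ sdim combH + 1 := leafCount_le_sdim_add_one combH_connected
  have hleaf : leafCount combH = 4 := by
    rw [leafCount_eq_filter]
    exact combH_leaf_card
  omega

end Final


/-- For a tree `T` of order at least 3 and an edge `e` of its complement,
`sdim(T + e) ≥ sdim(T) − 2` (stated additively), and the bound is sharp. -/
theorem sdim_tree_add_edge {V : Type*} [Fintype V]
    (T : SimpleGraph V) (hT : T.IsTree) (h3 : 3 ≤ Fintype.card V)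
    (u v : V) (he : Tᶜ.Adj u v) :
    sdim T ≤ sdim (T ⊔ fromEdgeSet {s(u, v)}) + 2 ∧
    ∃ (n : ℕ) (T' : SimpleGraph (Fin n)) (a b : Fin n),
      3 ≤ n ∧ T'.IsTree ∧ T'ᶜ.Adj a b ∧
      sdim (T' ⊔ fromEdgeSet {s(a, b)}) + 2 = sdim T' := by
  constructor
  · have hconn : (T ⊔ fromEdgeSet {s(u, v)}).Connected :=
      hT.isConnected.mono le_sup_left
    have h1 : sdim T + 1 ≤ leafCount T :=
      tree_sdim_add_one_le_leafCount hT (by omega)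
    have h2 : leafCount T ≤ leafCount (T ⊔ fromEdgeSet {s(u, v)}) + 2 :=
      leafCount_le_add_edge T u v
    have h3' : leafCount (T ⊔ fromEdgeSet {s(u, v)}) ≤ sdim (T ⊔ fromEdgeSet {s(u, v)}) + 1 :=
      leafCount_le_sdim_add_one hconn
    omega
  · refine ⟨12, combT, 7, 10, by norm_num, combT_isTree, ?_, ?_⟩
    · rw [SimpleGraph.compl_adj]
      exact ⟨by decide, by decide⟩
    · rw [combH_eq, sdim_combH, sdim_combT]
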